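/- Let Δ = {x_1, …, x_n} be a regular simplex with side length α > 0 (all pairwise distances between the n distinct points equal α). Then for every integer m ≥ 2 there exists r > 0 such that Δ embeds isometrically into the n-fold product T_{m,r}^n ⊆ ℝ^{2n}, where T_{m,r} ⊂ ℝ² is a regular m-gon of circumradius r. (Explicitly, choosing r so that the side length of T_{m,r} is α/√2, and letting p, p' be two adjacent vertices of T_{m,r}, the points x̃_i whose i-th coordinate is p and all other coordinates are p' satisfy ‖x̃_i − x̃_{i'}‖ = α for all i ≠ i'.) -/

import Mathlib

open scoped Classical

noncomputable section

/-- The `j`-th vertex of a regular `m`-gon in the Euclidean plane with center `c`,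
circumradius `r` and angle `θ`. -/
def polygonVertex (c : EuclideanSpace ℝ (Fin 2)) (r θ : ℝ) (m j : ℕ) :
    EuclideanSpace ℝ (Fin 2) :=
  (WithLp.equiv 2 (Fin 2 → ℝ)).symm
    ![c 0 + r * Real.cos (2 * Real.pi * j / m + θ),
      c 1 + r * Real.sin (2 * Real.pi * j / m + θ)]

/-- `T` is (the vertex set of) a regular `m`-gon of circumradius `r` in the plane. -/
def IsRegularPolygon (m : ℕ) (r : ℝ) (T : Set (EuclideanSpace ℝ (Fin 2))) : Prop :=
  2 ≤ m ∧ 0 < r ∧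
    ∃ (c : EuclideanSpace ℝ (Fin 2)) (θ : ℝ),
      T = {p | ∃ j < m, p = polygonVertex c r θ m j}

/-- The Cartesian product of `n` planar sets, viewed inside `ℝ^{2n}`. -/
def toriProduct {n : ℕ} (T : Fin n → Set (EuclideanSpace ℝ (Fin 2))) :
    Set (EuclideanSpace ℝ (Fin n × Fin 2)) :=
  {x | ∀ i : Fin n, ((WithLp.equiv 2 (Fin 2 → ℝ)).symm fun j => x (i, j)) ∈ T i}

/-- Every regular simplex of side length `α` embeds isometrically, for every `m ≥ 2`,
into the `n`-fold product of a regular `m`-gon of a suitable circumradius `r`. -/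
theorem regular_simplex_embeds_into_regular_torus
    (n d : ℕ) (x : Fin n → EuclideanSpace ℝ (Fin d)) (α : ℝ) (hα : 0 < α)
    (hinj : Function.Injective x)
    (hdist : ∀ i i', i ≠ i' → dist (x i) (x i') = α)
    (m : ℕ) (hm : 2 ≤ m) :
    ∃ r > 0, ∃ T : Set (EuclideanSpace ℝ (Fin 2)),
      IsRegularPolygon m r T ∧
      ∃ f : Fin n → EuclideanSpace ℝ (Fin n × Fin 2),
        (∀ i, f i ∈ toriProduct fun _ => T) ∧
        ∀ i i', dist (f i) (f i') = dist (x i) (x i') := by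

  classical
  have hmR : (2:ℝ) ≤ (m:ℝ) := by exact_mod_cast hm
  have hm0 : 0 < m := by omega
  have hm1 : 1 < m := by omega
  have hspos : 0 < Real.sin (Real.pi / m) := by
    apply Real.sin_pos_of_pos_of_lt_pi
    · positivity
    · calc Real.pi / m < Real.pi / 1 := by
            apply div_lt_div_of_pos_left Real.pi_pos one_pos
            exact_mod_cast hm1
        _ = Real.pi := by ring
  set s := Real.sin (Real.pi / m) with hsdef
  set r := α / (2 * Real.sqrt 2 * s) with hrdef
  have hrpos : 0 < r := by
    apply div_pos hα
    positivity
  set P := polygonVertex 0 r 0 m 0 with hP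
  set Q := polygonVertex 0 r 0 m 1 with hQ
  -- planar squared distance between two adjacent vertices
  have hPQ : (P 0 - Q 0)^2 + (P 1 - Q 1)^2 = α^2 / 2 := by
    have hP0 : P 0 = r := by
      simp [hP, polygonVertex]
    have hP1 : P 1 = 0 := by
      simp [hP, polygonVertex]
    have hQ0 : Q 0 = r * Real.cos (2 * (Real.pi / m)) := by
      simp [hQ, polygonVertex]
      left
      ring
    have hQ1 : Q 1 = r * Real.sin (2 * (Real.pi / m)) := by
      simp [hQ, polygonVertex]
      left
      ring
    have hr2 : r^2 * (4 * s^2) = α^2 / 2 := by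
      rw [hrdef]
      have h2 : Real.sqrt 2 ^ 2 = 2 := Real.sq_sqrt (by norm_num)
      field_simp
      rw [h2]; ring
    have hcos : Real.cos (2 * (Real.pi / m)) = 1 - 2 * s^2 := by
      rw [Real.cos_two_mul]
      have hsc := Real.sin_sq_add_cos_sq (Real.pi / m)
      nlinarith [hsc]
    rw [hP0, hP1, hQ0, hQ1, hcos]
    have hsc := Real.sin_sq_add_cos_sq (Real.pi / m)
    have hsin2 : Real.sin (2 * (Real.pi / m)) = 2 * s * Real.cos (Real.pi / m) := by
      rw [Real.sin_two_mul]
    rw [hsin2]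
    nlinarith [hr2, hsc]
  refine ⟨r, hrpos, {p | ∃ j < m, p = polygonVertex 0 r 0 m j},
    ⟨hm, hrpos, 0, 0, rfl⟩, ?_⟩
  set f : Fin n → EuclideanSpace ℝ (Fin n × Fin 2) := fun i =>
    (WithLp.equiv 2 (Fin n × Fin 2 → ℝ)).symm fun k => if k.1 = i then P k.2 else Q k.2
    with hf
  have hfapp : ∀ i k, f i k = if k.1 = i then P k.2 else Q k.2 := by
    intro i k; rfl
  refine ⟨f, ?_, ?_⟩
  · intro i
    simp only [toriProduct, Set.mem_setOf_eq]
    intro i'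
    by_cases h : i' = i
    · refine ⟨0, hm0, ?_⟩
      subst h
      have : ((WithLp.equiv 2 (Fin 2 → ℝ)).symm fun j => f i' (i', j)) = P := by
        ext j
        simp [hfapp]
      rw [this, hP]
    · refine ⟨1, hm1, ?_⟩
      have : ((WithLp.equiv 2 (Fin 2 → ℝ)).symm fun j => f i (i', j)) = Q := by
        ext j
        simp [hfapp, h]
      rw [this, hQ]
  · intro i i'
    by_cases h : i = i'
    · subst h; simp
    · rw [hdist i i' h]
      have hg : ∀ b : Fin 2, dist (P b) (Q b)^2 = (P b - Q b)^2 := by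
        intro b; rw [Real.dist_eq, sq_abs]
      have hsum : (∑ k : Fin n × Fin 2, dist (f i k) (f i' k)^2) = α^2 := by
        rw [Fintype.sum_prod_type]
        have hinner : ∀ a : Fin n,
            (∑ b : Fin 2, dist (f i (a, b)) (f i' (a, b))^2)
            = (if a = i then α^2/2 else 0) + (if a = i' then α^2/2 else 0) := by
          intro a
          rw [Fin.sum_univ_two]
          simp only [hfapp]
          by_cases hai : a = i
          · have hai' : a ≠ i' := fun hh => h (hai ▸ hh)
            rw [if_pos hai, if_pos hai, if_pos hai, if_neg hai', if_neg hai', if_neg hai']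
            rw [hg 0, hg 1, hPQ]
            ring
          · by_cases hai' : a = i'
            · rw [if_neg hai, if_neg hai, if_neg hai, if_pos hai', if_pos hai', if_pos hai']
              have hg' : ∀ b : Fin 2, dist (Q b) (P b)^2 = (P b - Q b)^2 := by
                intro b; rw [dist_comm]; exact hg b
              rw [hg' 0, hg' 1, hPQ]
              ring
            · rw [if_neg hai, if_neg hai, if_neg hai, if_neg hai', if_neg hai', if_neg hai']
              simp
        calc (∑ a : Fin n, ∑ b : Fin 2, dist (f i (a, b)) (f i' (a, b))^2)
            = ∑ a : Fin n, ((if a = i then α^2/2 else 0) + (if a = i' then α^2/2 else 0)) := by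
              exact Finset.sum_congr rfl fun a _ => hinner a
          _ = α^2 := by
              rw [Finset.sum_add_distrib, Finset.sum_ite_eq', Finset.sum_ite_eq']
              simp
      rw [EuclideanSpace.dist_eq]
      have : ∀ k : Fin n × Fin 2, dist (f i k) (f i' k)^2 = dist (f i k) (f i' k)^2 := fun _ => rfl
      rw [show (∑ k : Fin n × Fin 2, dist (f i k) (f i' k)^2) = α^2 from hsum]
      exact Real.sqrt_sq hα.le
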